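/- Let T be a tree on n vertices (n even) with a perfect matching given by the edge set M, and suppose T admits a strong graceful labelling. Then the permutation g₁ = (0 1)(2 3)⋯(n−2 n−1) of {0, 1, …, n − 1}, which sends each even label 2k to 2k + 1 and each odd label 2k + 1 to 2k, is a generalised strongly graceful permutation of T; that is, for every strong graceful labelling f of T, the labelling g₁ ∘ f is again a strong graceful labelling of T. -/

import Mathlib

open SimpleGraph

def myg : ℕ → ℕ := fun b => if Even b then b + 1 else b - 1

lemma myg_eq (b : ℕ) : myg b = if b % 2 = 0 then b + 1 else b - 1 := by
  simp [myg, Nat.even_iff]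

lemma myg_invol (b : ℕ) : myg (myg b) = b := by
  rw [myg_eq, myg_eq]
  split_ifs <;> omega

lemma myg_inj : Function.Injective myg :=
  Function.LeftInverse.injective myg_invol

lemma myg_dist (a b : ℕ) (h : (a + b) % 2 = 0) :
    Nat.dist (myg a) (myg b) = Nat.dist a b := by
  rw [myg_eq, myg_eq]
  simp only [Nat.dist]
  split_ifs <;> omega

lemma myg_sum (a b : ℕ) (h : (a + b) % 2 = 1) : myg a + myg b = a + b := by
  rw [myg_eq, myg_eq]
  split_ifs <;> omega

lemma dist_parity (a b : ℕ) : Nat.dist a b % 2 = (a + b) % 2 := by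
  simp only [Nat.dist]; omega

lemma dist_sum_eq (a b c d : ℕ) (hs : a + b = c + d) (hd : Nat.dist a b = Nat.dist c d) :
    (a = c ∧ b = d) ∨ (a = d ∧ b = c) := by
  simp only [Nat.dist] at hd; omega

/-- A graceful labelling of a graph `G` with `m` edges: an injective function
`f` from the vertices into `{0, 1, …, m}` such that the induced edge labels
`|f u − f v|` are pairwise distinct over the edges. -/
def IsGracefulLabeling {V : Type} (G : SimpleGraph V) (f : V → ℕ) : Prop :=
  Function.Injective f ∧ (∀ v, f v ≤ G.edgeSet.ncard) ∧
  ∀ u v x y : V, G.Adj u v → G.Adj x y →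
    Nat.dist (f u) (f v) = Nat.dist (f x) (f y) → s(u, v) = s(x, y)

/-- A strong graceful labelling of `G` on `n` vertices with respect to a matching `M`:
a graceful labelling such that `f x + f y = n - 1` for every edge `xy ∈ M`. -/
def IsStrongGracefulLabeling {V : Type} [Fintype V] (G : SimpleGraph V)
    (M : G.Subgraph) (f : V → ℕ) : Prop :=
  IsGracefulLabeling G f ∧ ∀ x y : V, M.Adj x y → f x + f y = Fintype.card V - 1


/-- `g` is a generalised strongly graceful permutation of `G` (with matching `M`):
`g` permutes `{0, …, n-1}` and for every strong graceful labelling `f`,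
the labelling `g ∘ f` is again a strong graceful labelling. -/
def IsGenStronglyGracefulPerm {V : Type} [Fintype V] (G : SimpleGraph V)
    (M : G.Subgraph) (g : ℕ → ℕ) : Prop :=
  Set.BijOn g (Set.Iio (Fintype.card V)) (Set.Iio (Fintype.card V)) ∧
  ∀ f : V → ℕ, IsStrongGracefulLabeling G M f → IsStrongGracefulLabeling G M (g ∘ f)


theorem g1_genStronglyGracefulPerm {V : Type} [Fintype V] (G : SimpleGraph V)
    (hT : G.IsTree) (hEven : Even (Fintype.card V))
    (M : G.Subgraph) (hM : M.IsPerfectMatching)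
    (hex : ∃ f : V → ℕ, IsStrongGracefulLabeling G M f) :
    IsGenStronglyGracefulPerm G M (fun b => if Even b then b + 1 else b - 1) := by
  classical
  show IsGenStronglyGracefulPerm G M myg
  set n := Fintype.card V with hn
  have hne : Nonempty V := hT.isConnected.nonempty
  have hn1 : 1 ≤ n := Fintype.card_pos
  have hnpar : n % 2 = 0 := Nat.even_iff.mp hEven
  have hn2 : 2 ≤ n := by omega
  have hcard : G.edgeSet.ncard = n - 1 := by
    have h := hT.card_edgeFinset
    have h2 : G.edgeSet.ncard = G.edgeFinset.card := by
      rw [Set.ncard_eq_toFinset_card']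
      congr 1
    omega
  constructor
  · refine ⟨fun b hb => ?_, fun a _ b _ h => myg_inj h, fun b hb => ?_⟩
    · simp only [Set.mem_Iio] at *
      rw [myg_eq]; split_ifs <;> omega
    · simp only [Set.mem_Iio] at hb
      refine ⟨myg b, ?_, myg_invol b⟩
      simp only [Set.mem_Iio]
      rw [myg_eq]; split_ifs <;> omega
  · rintro f ⟨⟨hinj, hbound, hdistinct⟩, hsum⟩
    have hb' : ∀ v, f v ≤ n - 1 := fun v => hcard ▸ hbound v
    -- f is surjective onto {0, ..., n-1}
    have hsurj : ∀ a, a < n → ∃ v, f v = a := by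
      intro a ha
      have himg : Finset.image f Finset.univ = Finset.range n := by
        apply Finset.eq_of_subset_of_card_le
        · intro x hx
          simp only [Finset.mem_image] at hx
          obtain ⟨v, _, rfl⟩ := hx
          simp only [Finset.mem_range]
          have := hb' v; omega
        · rw [Finset.card_range, Finset.card_image_of_injective _ hinj,
            Finset.card_univ]
      have : a ∈ Finset.image f Finset.univ := by
        rw [himg]; simpa using ha
      simp only [Finset.mem_image] at this
      obtain ⟨v, _, hv⟩ := this
      exact ⟨v, hv⟩
    -- non-matching edges have even label sums
    have hnonm : ∀ u v, G.Adj u v → ¬ M.Adj u v → (f u + f v) % 2 = 0 := by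
      intro u v huv hMuv
      by_contra hodd
      have hodd' : (f u + f v) % 2 = 1 := by omega
      set d := Nat.dist (f u) (f v) with hd
      have hdodd : d % 2 = 1 := by rw [hd, dist_parity]; exact hodd'
      have hdle : d ≤ n - 1 := by
        have := hb' u; have := hb' v
        simp only [hd, Nat.dist]; omega
      obtain ⟨x, hx⟩ := hsurj ((n - 1 - d) / 2) (by omega)
      obtain ⟨y, hy, -⟩ := hM.1 (hM.2 x)
      have hfy : f y = (n - 1 - d) / 2 + d := by
        have := hsum x y hy; omega
      have hdxy : Nat.dist (f u) (f v) = Nat.dist (f x) (f y) := by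
        rw [hx, hfy, ← hd]; simp only [Nat.dist]; omega
      have := hdistinct u v x y huv hy.adj_sub hdxy
      rw [Sym2.eq_iff] at this
      rcases this with ⟨rfl, rfl⟩ | ⟨rfl, rfl⟩
      · exact hMuv hy
      · exact hMuv hy.symm
    have hmsum : ∀ u v, M.Adj u v → (f u + f v) % 2 = 1 := by
      intro u v huv
      rw [hsum u v huv]; omega
    refine ⟨⟨myg_inj.comp hinj, fun v => ?_, ?_⟩, fun x y hxy => ?_⟩
    · rw [hcard]
      have := hb' v
      simp only [Function.comp_apply, myg_eq]
      split_ifs <;> omega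
    · intro u v x y huv hxy hd
      simp only [Function.comp_apply] at hd
      by_cases hMu : M.Adj u v <;> by_cases hMx : M.Adj x y
      · -- both matching
        have h1 := myg_sum _ _ (hmsum u v hMu)
        have h2 := myg_sum _ _ (hmsum x y hMx)
        have hs : myg (f u) + myg (f v) = myg (f x) + myg (f y) := by
          rw [h1, h2, hsum u v hMu, hsum x y hMx]
        rcases dist_sum_eq _ _ _ _ hs hd with ⟨e1, e2⟩ | ⟨e1, e2⟩
        · rw [hinj (myg_inj e1), hinj (myg_inj e2)]
        · rw [hinj (myg_inj e1), hinj (myg_inj e2), Sym2.eq_swap]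
      · -- odd vs even distance: contradiction
        exfalso
        have h1 : Nat.dist (myg (f u)) (myg (f v)) % 2 = 1 := by
          rw [dist_parity, myg_sum _ _ (hmsum u v hMu)]
          exact hmsum u v hMu
        have h2 : Nat.dist (myg (f x)) (myg (f y)) % 2 = 0 := by
          rw [myg_dist _ _ (hnonm x y hxy hMx), dist_parity]
          exact hnonm x y hxy hMx
        omega
      · exfalso
        have h1 : Nat.dist (myg (f u)) (myg (f v)) % 2 = 0 := by
          rw [myg_dist _ _ (hnonm u v huv hMu), dist_parity]
          exact hnonm u v huv hMu
        have h2 : Nat.dist (myg (f x)) (myg (f y)) % 2 = 1 := by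
          rw [dist_parity, myg_sum _ _ (hmsum x y hMx)]
          exact hmsum x y hMx
        omega
      · -- both non-matching
        apply hdistinct u v x y huv hxy
        rw [← myg_dist _ _ (hnonm u v huv hMu), ← myg_dist _ _ (hnonm x y hxy hMx)]
        exact hd
    · simp only [Function.comp_apply]
      rw [myg_sum _ _ (hmsum x y hxy)]
      exact hsum x y hxy
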